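/- Left deriving is a pseudofunctor L from the 2-category whose objects are model categories, whose 1-cells are functors preserving cofibrant objects and weak equivalences between cofibrant objects, and whose 2-cells are natural transformations, to the 2-category Cat: on a natural transformation α : f ⇒ g it gives the induced transformation of L f ⇒ L g represented by αQ, with compositor isomorphisms L h ∘ L f ≅ L(hf) represented by h(q_{fQ-}) and unitor L Id ≅ Id represented by q, satisfying the pseudofunctor coherence axioms. -/

import Mathlib

open CategoryTheory

universe v u

/-- The homotopical data of a model category relevant to derived functors:
weak equivalences (containing identities and satisfying two-out-of-three),
cofibrant and fibrant objects, and functorial cofibrant and fibrant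
replacements `q : Q ⟶ 𝟭` and `r : 𝟭 ⟶ R`. -/
structure ModelData (C : Type u) [Category.{v} C] where
  W : MorphismProperty C
  containsIdentities : W.ContainsIdentities
  twoOutOfThree : W.HasTwoOutOfThreeProperty
  Cofibrant : C → Prop
  Fibrant : C → Prop
  Q : C ⥤ C
  q : Q ⟶ 𝟭 C
  R : C ⥤ C
  r : 𝟭 C ⟶ R
  cofibrant_Q : ∀ X, Cofibrant (Q.obj X)
  fibrant_R : ∀ X, Fibrant (R.obj X)
  W_q : ∀ X, W (q.app X)
  W_r : ∀ X, W (r.app X)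

variable {C : Type u} [Category.{v} C] {D : Type u} [Category.{v} D]

/-- `F` preserves cofibrant objects and weak equivalences between cofibrant
objects. -/
def PreservesCofibrant (M : ModelData C) (N : ModelData D) (F : C ⥤ D) : Prop :=
  (∀ X, M.Cofibrant X → N.Cofibrant (F.obj X)) ∧
    (∀ ⦃X Y : C⦄ (f : X ⟶ Y), M.Cofibrant X → M.Cofibrant Y → M.W f →
      N.W (F.map f))

/-- `F` preserves fibrant objects and weak equivalences between fibrant
objects. -/
def PreservesFibrant (M : ModelData C) (N : ModelData D) (F : C ⥤ D) : Prop :=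
  (∀ X, M.Fibrant X → N.Fibrant (F.obj X)) ∧
    (∀ ⦃X Y : C⦄ (f : X ⟶ Y), M.Fibrant X → M.Fibrant Y → M.W f →
      N.W (F.map f))

/-- A bundled model category (with derived-functor data). -/
structure MCat where
  C : Type u
  [cat : Category.{v} C]
  data : ModelData C

attribute [instance] MCat.cat

/-- 1-cells: functors preserving cofibrant objects and weak equivalences
between cofibrant objects. -/
def GoodFun (M N : MCat) :=
  {F : M.C ⥤ N.C // PreservesCofibrant M.data N.data F}

/-- The identity 1-cell. -/
def GoodFun.id (M : MCat) : GoodFun M M :=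
  ⟨𝟭 M.C, fun _ h => h, fun _ _ _ _ _ hw => hw⟩

/-- Composition of 1-cells. -/
def GoodFun.comp {M N P : MCat} (F : GoodFun M N) (G : GoodFun N P) :
    GoodFun M P :=
  ⟨F.1 ⋙ G.1,
    fun X h => G.2.1 _ (F.2.1 X h),
    fun _ _ f hX hY hw => G.2.2 _ (F.2.1 _ hX) (F.2.1 _ hY) (F.2.2 f hX hY hw)⟩

/-- The data and coherence axioms of a pseudofunctor from the (strict)
2-category of model categories — with 1-cells the functors preserving cofibrant
objects and weak equivalences between them, and 2-cells all natural
transformations — to `Cat`, fixed on objects to be `M ↦ Ho(M)`. -/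
structure DerivedData where
  map : ∀ {M N : MCat}, GoodFun M N →
    (M.data.W.Localization ⥤ N.data.W.Localization)
  map₂ : ∀ {M N : MCat} {F G : GoodFun M N}, (F.1 ⟶ G.1) → (map F ⟶ map G)
  mapId : ∀ M : MCat, map (GoodFun.id M) ≅ 𝟭 _
  mapComp : ∀ {M N P : MCat} (F : GoodFun M N) (G : GoodFun N P),
    map (F.comp G) ≅ map F ⋙ map G
  map₂_id : ∀ {M N : MCat} (F : GoodFun M N), map₂ (𝟙 F.1) = 𝟙 (map F)
  map₂_comp : ∀ {M N : MCat} {F G H : GoodFun M N}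
    (α : F.1 ⟶ G.1) (β : G.1 ⟶ H.1), map₂ (α ≫ β) = map₂ α ≫ map₂ β
  mapComp_natural : ∀ {M N P : MCat} {F F' : GoodFun M N} {G G' : GoodFun N P}
    (α : F.1 ⟶ F'.1) (β : G.1 ⟶ G'.1),
    (mapComp F G).inv ≫
        map₂ (F := F.comp G) (G := F'.comp G')
          (Functor.whiskerRight α G.1 ≫ Functor.whiskerLeft F'.1 β) =
      (Functor.whiskerRight (map₂ α) (map G) ≫ Functor.whiskerLeft (map F') (map₂ β)) ≫
        (mapComp F' G').inv
  assoc_coherence : ∀ {M N P Q : MCat}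
    (F : GoodFun M N) (G : GoodFun N P) (H : GoodFun P Q),
    (mapComp (F.comp G) H).hom ≫ Functor.whiskerRight (mapComp F G).hom (map H) =
      (mapComp F (G.comp H)).hom ≫ Functor.whiskerLeft (map F) (mapComp G H).hom
  id_comp_coherence : ∀ {M N : MCat} (F : GoodFun M N),
    (mapComp (GoodFun.id M) F).hom ≫ Functor.whiskerRight (mapId M).hom (map F) =
      𝟙 (map F)
  comp_id_coherence : ∀ {M N : MCat} (F : GoodFun M N),
    (mapComp F (GoodFun.id N)).hom ≫ Functor.whiskerLeft (map F) (mapId N).hom =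
      𝟙 (map F)

namespace LDerive

noncomputable section

open Localization

open Functor

attribute [reducible] GoodFun

variable {M N P R : MCat}

lemma W_Q_map (M : MCat) {X Y : M.C} (f : X ⟶ Y) (hf : M.data.W f) :
    M.data.W (M.data.Q.map f) := by
  haveI := M.data.twoOutOfThree
  refine M.data.W.of_postcomp _ _ (M.data.W_q Y) ?_
  rw [M.data.q.naturality f]
  exact M.data.W.comp_mem _ _ (M.data.W_q X) hf

/-- The representative of the left derived functor at the level of model
categories. -/
def bar (F : GoodFun M N) : M.C ⥤ N.data.W.Localization :=
  (M.data.Q ⋙ F.1) ⋙ N.data.W.Q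

attribute [reducible] bar

lemma inverts_bar (F : GoodFun M N) : M.data.W.IsInvertedBy (bar F) :=
  fun X Y f hf => Localization.inverts N.data.W.Q N.data.W _
    (F.2.2 _ (M.data.cofibrant_Q X) (M.data.cofibrant_Q Y) (W_Q_map M f hf))

/-- The left derived functor. -/
def Lmap (F : GoodFun M N) : M.data.W.Localization ⥤ N.data.W.Localization :=
  Localization.lift (bar F) (inverts_bar F) M.data.W.Q

instance liftingLmap (F : GoodFun M N) :
    Lifting M.data.W.Q M.data.W (bar F) (Lmap F) :=
  Localization.liftingLift _ _ _

/-- The canonical isomorphism exhibiting `Lmap F` as a lift of `bar F`. -/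
def eIso (F : GoodFun M N) : M.data.W.Q ⋙ Lmap F ≅ bar F :=
  Lifting.iso M.data.W.Q M.data.W (bar F) (Lmap F)

lemma isIso_Qmap (M : MCat) {X Y : M.C} {f : X ⟶ Y} (hf : M.data.W f) :
    IsIso (M.data.W.Q.map f) :=
  Localization.inverts _ M.data.W f hf

/-- The derived natural transformation. -/
def Lmap₂ {F G : GoodFun M N} (α : F.1 ⟶ G.1) : Lmap F ⟶ Lmap G :=
  liftNatTrans M.data.W.Q M.data.W (bar F) (bar G) (Lmap F) (Lmap G)
    (whiskerRight (whiskerLeft M.data.Q α) N.data.W.Q)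

lemma Lmap₂_app {F G : GoodFun M N} (α : F.1 ⟶ G.1) (X : M.C) :
    (Lmap₂ α).app (M.data.W.Q.obj X) =
      (eIso F).hom.app X ≫ N.data.W.Q.map (α.app (M.data.Q.obj X)) ≫
        (eIso G).inv.app X :=
  liftNatTrans_app _ _ _ _ _ _ _ _

/-- The comparison transformation for composition. -/
def theta (F : GoodFun M N) (G : GoodFun N P) :
    ((M.data.Q ⋙ F.1) ⋙ bar G : M.C ⥤ P.data.W.Localization) ⟶
      bar (F.comp G) :=
  whiskerRight (whiskerLeft (M.data.Q ⋙ F.1) (whiskerRight N.data.q G.1))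
    P.data.W.Q

lemma theta_app (F : GoodFun M N) (G : GoodFun N P) (X : M.C) :
    (theta F G).app X =
      P.data.W.Q.map (G.1.map (N.data.q.app (F.1.obj (M.data.Q.obj X)))) :=
  rfl

instance isIso_theta_app (F : GoodFun M N) (G : GoodFun N P) (X : M.C) :
    IsIso ((theta F G).app X) :=
  isIso_Qmap P (G.2.2 _ (N.data.cofibrant_Q _)
    (F.2.1 _ (M.data.cofibrant_Q X)) (N.data.W_q _))

instance isIso_theta (F : GoodFun M N) (G : GoodFun N P) : IsIso (theta F G) :=
  NatIso.isIso_of_isIso_app _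

instance lifting₂ (F : GoodFun M N) (G : GoodFun N P) :
    Lifting M.data.W.Q M.data.W ((M.data.Q ⋙ F.1) ⋙ bar G)
      (Lmap F ⋙ Lmap G) :=
  ⟨(Functor.associator _ _ _).symm ≪≫ isoWhiskerRight (eIso F) (Lmap G) ≪≫
    Functor.associator _ _ _ ≪≫ isoWhiskerLeft (M.data.Q ⋙ F.1) (eIso G)⟩

lemma lifting₂_iso_hom_app (F : GoodFun M N) (G : GoodFun N P) (X : M.C) :
    (Lifting.iso M.data.W.Q M.data.W ((M.data.Q ⋙ F.1) ⋙ bar G)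
        (Lmap F ⋙ Lmap G)).hom.app X =
      (Lmap G).map ((eIso F).hom.app X) ≫
        (eIso G).hom.app (F.1.obj (M.data.Q.obj X)) := by
  simp only [Lifting.iso, lifting₂, Iso.trans_hom, Iso.symm_hom,
    isoWhiskerRight_hom, isoWhiskerLeft_hom, NatTrans.comp_app,
    Functor.associator_hom_app, Functor.associator_inv_app, whiskerRight_app,
    whiskerLeft_app, Category.comp_id, Category.id_comp, Category.assoc]
  rfl

lemma lifting₂_iso_inv_app (F : GoodFun M N) (G : GoodFun N P) (X : M.C) :
    (Lifting.iso M.data.W.Q M.data.W ((M.data.Q ⋙ F.1) ⋙ bar G)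
        (Lmap F ⋙ Lmap G)).inv.app X =
      (eIso G).inv.app (F.1.obj (M.data.Q.obj X)) ≫
        (Lmap G).map ((eIso F).inv.app X) := by
  simp only [Lifting.iso, lifting₂, Iso.trans_inv, Iso.symm_inv,
    isoWhiskerRight_inv, isoWhiskerLeft_inv, NatTrans.comp_app,
    Functor.associator_hom_app, Functor.associator_inv_app, whiskerRight_app,
    whiskerLeft_app, Category.comp_id, Category.id_comp, Category.assoc]
  rfl

/-- The compositor. -/
def LmapComp (F : GoodFun M N) (G : GoodFun N P) :
    Lmap (F.comp G) ≅ Lmap F ⋙ Lmap G :=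
  (liftNatIso M.data.W.Q M.data.W ((M.data.Q ⋙ F.1) ⋙ bar G)
    (bar (F.comp G)) (Lmap F ⋙ Lmap G) (Lmap (F.comp G))
    (asIso (theta F G))).symm

lemma LmapComp_inv_app (F : GoodFun M N) (G : GoodFun N P) (X : M.C) :
    (LmapComp F G).inv.app (M.data.W.Q.obj X) =
      (Lmap G).map ((eIso F).hom.app X) ≫
        (eIso G).hom.app (F.1.obj (M.data.Q.obj X)) ≫
        (theta F G).app X ≫ (eIso (F.comp G)).inv.app X := by
  have := liftNatTrans_app M.data.W.Q M.data.W ((M.data.Q ⋙ F.1) ⋙ bar G)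
    (bar (F.comp G)) (Lmap F ⋙ Lmap G) (Lmap (F.comp G))
    (asIso (theta F G)).hom X
  simp only [LmapComp, Iso.symm_inv, liftNatIso, asIso_hom] at this ⊢
  rw [this, lifting₂_iso_hom_app]
  simp [eIso]

/-- The transformation underlying the unitor. -/
def tauId (M : MCat) : (bar (GoodFun.id M) : M.C ⥤ M.data.W.Localization) ⟶
    M.data.W.Q :=
  whiskerRight M.data.q M.data.W.Q

instance isIso_tauId_app (M : MCat) (X : M.C) : IsIso ((tauId M).app X) :=
  isIso_Qmap M (M.data.W_q X)

instance isIso_tauId (M : MCat) : IsIso (tauId M) :=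
  NatIso.isIso_of_isIso_app _

/-- The unitor. -/
def LmapId (M : MCat) : Lmap (GoodFun.id M) ≅ 𝟭 _ :=
  liftNatIso M.data.W.Q M.data.W (bar (GoodFun.id M)) M.data.W.Q
    (Lmap (GoodFun.id M)) (𝟭 _) (asIso (tauId M))

lemma LmapId_hom_app (M : MCat) (X : M.C) :
    (LmapId M).hom.app (M.data.W.Q.obj X) =
      (eIso (GoodFun.id M)).hom.app X ≫ M.data.W.Q.map (M.data.q.app X) := by
  have := liftNatTrans_app M.data.W.Q M.data.W (bar (GoodFun.id M))
    M.data.W.Q (Lmap (GoodFun.id M)) (𝟭 _) (asIso (tauId M)).hom X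
  simp only [LmapId, liftNatIso, asIso_hom] at this ⊢
  rw [this]
  simp [eIso, tauId, Lifting.iso]
  erw [Category.comp_id]
  rfl

lemma W_of_Q (M : MCat) (X : M.C) {Y : M.C} {f : M.data.Q.obj X ⟶ Y}
    (hY : M.data.Cofibrant Y) : True := trivial

/-- Key lemma: the two canonical weak equivalences `QQX ⟶ QX`, namely
`q (QX)` and `Q (q X)`, have the same image in the homotopy category after
applying `F`. -/
lemma Q_map_q (F : GoodFun M N) (X : M.C) :
    N.data.W.Q.map (F.1.map (M.data.q.app (M.data.Q.obj X))) =
      N.data.W.Q.map (F.1.map (M.data.Q.map (M.data.q.app X))) := by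
  set a := M.data.q.app (M.data.Q.obj X) with ha
  set b := M.data.Q.map (M.data.q.app X) with hb
  have hWa : M.data.W a := M.data.W_q _
  have hWb : M.data.W b := W_Q_map M _ (M.data.W_q X)
  have rel0 : b ≫ M.data.q.app X = a ≫ M.data.q.app X := by
    simpa [ha, hb] using M.data.q.naturality (M.data.q.app X)
  have rel1 : M.data.Q.map a ≫ a = M.data.q.app (M.data.Q.obj (M.data.Q.obj X)) ≫ a := by
    simpa [ha] using M.data.q.naturality a
  have rel2 : M.data.Q.map b ≫ a = M.data.q.app (M.data.Q.obj (M.data.Q.obj X)) ≫ b := by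
    simpa [ha, hb] using M.data.q.naturality b
  have rel3 : M.data.Q.map a ≫ b = M.data.Q.map b ≫ b := by
    have h := congrArg (fun f => M.data.Q.map f) rel0
    simp only [Functor.map_comp] at h
    rw [← hb] at h
    exact h.symm
  -- pass to images in the homotopy category
  have im : ∀ {Y Z : M.C} (f : Y ⟶ Z), M.data.W f → M.data.Cofibrant Y →
      M.data.Cofibrant Z → IsIso (N.data.W.Q.map (F.1.map f)) :=
    fun f hf h1 h2 => isIso_Qmap N (F.2.2 f h1 h2 hf)
  have iA : IsIso (N.data.W.Q.map (F.1.map a)) :=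
    im a hWa (M.data.cofibrant_Q _) (M.data.cofibrant_Q _)
  have iB : IsIso (N.data.W.Q.map (F.1.map b)) :=
    im b hWb (M.data.cofibrant_Q _) (M.data.cofibrant_Q _)
  have iC : IsIso (N.data.W.Q.map (F.1.map
      (M.data.q.app (M.data.Q.obj (M.data.Q.obj X))))) :=
    im _ (M.data.W_q _) (M.data.cofibrant_Q _) (M.data.cofibrant_Q _)
  have h1 := congrArg (fun f => N.data.W.Q.map (F.1.map f)) rel1
  have h2 := congrArg (fun f => N.data.W.Q.map (F.1.map f)) rel2
  have h3 := congrArg (fun f => N.data.W.Q.map (F.1.map f)) rel3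
  simp only [Functor.map_comp] at h1 h2 h3
  have e1 : N.data.W.Q.map (F.1.map (M.data.Q.map a)) =
      N.data.W.Q.map (F.1.map (M.data.q.app (M.data.Q.obj (M.data.Q.obj X)))) := by
    have := h1
    rwa [cancel_mono (N.data.W.Q.map (F.1.map a))] at this
  have e3 : N.data.W.Q.map (F.1.map (M.data.Q.map a)) =
      N.data.W.Q.map (F.1.map (M.data.Q.map b)) := by
    have := h3
    rwa [cancel_mono (N.data.W.Q.map (F.1.map b))] at this
  rw [← e3, e1] at h2
  rwa [cancel_epi] at h2

lemma Lmap₂_id (F : GoodFun M N) : Lmap₂ (𝟙 F.1) = 𝟙 (Lmap F) :=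
  natTrans_ext M.data.W.Q M.data.W fun X => by
    rw [Lmap₂_app]
    simp only [NatTrans.id_app]
    erw [CategoryTheory.Functor.map_id, Category.id_comp]
    exact (eIso F).hom_inv_id_app X

lemma Lmap₂_comp {F G H : GoodFun M N} (α : F.1 ⟶ G.1) (β : G.1 ⟶ H.1) :
    Lmap₂ (α ≫ β) = Lmap₂ α ≫ Lmap₂ β :=
  natTrans_ext M.data.W.Q M.data.W fun X => by
    simp [Lmap₂_app]

lemma LmapComp_natural {F F' : GoodFun M N} {G G' : GoodFun N P}
    (α : F.1 ⟶ F'.1) (β : G.1 ⟶ G'.1) :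
    (LmapComp F G).inv ≫ Lmap₂ (F := F.comp G) (G := F'.comp G')
        (whiskerRight α G.1 ≫ whiskerLeft F'.1 β) =
      (whiskerRight (Lmap₂ α) (Lmap G) ≫ whiskerLeft (Lmap F') (Lmap₂ β)) ≫
        (LmapComp F' G').inv := by
  apply natTrans_ext M.data.W.Q M.data.W
  intro X
  have inner : N.data.q.app (F.1.obj (M.data.Q.obj X)) ≫ α.app (M.data.Q.obj X)
      = N.data.Q.map (α.app (M.data.Q.obj X)) ≫
        N.data.q.app (F'.1.obj (M.data.Q.obj X)) := by
    simpa using (N.data.q.naturality (α.app (M.data.Q.obj X))).symm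
  have key1 : (theta F G).app X ≫
      P.data.W.Q.map (G.1.map (α.app (M.data.Q.obj X))) =
      P.data.W.Q.map (G.1.map (N.data.Q.map (α.app (M.data.Q.obj X)))) ≫
        (theta F' G).app X := by
    erw [theta_app, theta_app, ← P.data.W.Q.map_comp, ← G.1.map_comp, inner,
      G.1.map_comp, P.data.W.Q.map_comp]
    rfl
  have inner2 : G.1.map (N.data.q.app (F'.1.obj (M.data.Q.obj X))) ≫
      β.app (F'.1.obj (M.data.Q.obj X)) =
      β.app (N.data.Q.obj (F'.1.obj (M.data.Q.obj X))) ≫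
        G'.1.map (N.data.q.app (F'.1.obj (M.data.Q.obj X))) :=
    β.naturality _
  have key3 : (theta F' G).app X ≫
      P.data.W.Q.map (β.app (F'.1.obj (M.data.Q.obj X))) =
      P.data.W.Q.map (β.app (N.data.Q.obj (F'.1.obj (M.data.Q.obj X)))) ≫
        (theta F' G').app X := by
    erw [theta_app, theta_app, ← P.data.W.Q.map_comp, inner2,
      P.data.W.Q.map_comp]
    rfl
  have key2 := (eIso G).hom.naturality (α.app (M.data.Q.obj X))
  simp only [bar, Functor.comp_map] at key2
  have key4 := (Lmap₂ β).naturality ((eIso F').inv.app X)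
  simp only [bar, Functor.comp_obj, Functor.comp_map] at key4
  rw [Lmap₂_app] at key4
  have cancel1 : (Lmap G').map ((eIso F').inv.app X) ≫
      (Lmap G').map ((eIso F').hom.app X) = 𝟙 _ := by
    rw [← Functor.map_comp, Iso.inv_hom_id_app, CategoryTheory.Functor.map_id]
  rw [NatTrans.comp_app, NatTrans.comp_app, NatTrans.comp_app,
    whiskerRight_app, whiskerLeft_app, LmapComp_inv_app, LmapComp_inv_app,
    Lmap₂_app, Lmap₂_app]
  simp only [NatTrans.comp_app, whiskerRight_app, whiskerLeft_app,
    Functor.map_comp, Category.assoc, Iso.inv_hom_id_app_assoc]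
  erw [NatTrans.comp_app, Functor.map_comp, whiskerRight_app α, whiskerLeft_app _ β,
    Category.assoc]
  rw [reassoc_of% key1]
  erw [Category.assoc]
  erw [reassoc_of% key3]
  rw [← reassoc_of% key2,
    reassoc_of% key4, reassoc_of% cancel1]
  simp
  erw [Category.assoc]
  rfl

lemma assoc_inv {R' : MCat} (F : GoodFun M N) (G : GoodFun N P)
    (H : GoodFun P R') :
    whiskerRight (LmapComp F G).inv (Lmap H) ≫ (LmapComp (F.comp G) H).inv =
      whiskerLeft (Lmap F) (LmapComp G H).inv ≫
        (LmapComp F (G.comp H)).inv := by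
  apply natTrans_ext M.data.W.Q M.data.W
  intro X
  have cancelA : (Lmap H).map ((eIso (F.comp G)).inv.app X) ≫
      (Lmap H).map ((eIso (F.comp G)).hom.app X) = 𝟙 _ := by
    rw [← Functor.map_comp, Iso.inv_hom_id_app, CategoryTheory.Functor.map_id]
  have keyA : (Lmap H).map ((theta F G).app X) ≫
      (eIso H).hom.app ((F.comp G).1.obj (M.data.Q.obj X)) =
      (eIso H).hom.app
          (G.1.obj (N.data.Q.obj (F.1.obj (M.data.Q.obj X)))) ≫
        R'.data.W.Q.map (H.1.map (P.data.Q.map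
          (G.1.map (N.data.q.app (F.1.obj (M.data.Q.obj X)))))) := by
    have h := (eIso H).hom.naturality
      (G.1.map (N.data.q.app (F.1.obj (M.data.Q.obj X))))
    simp only [bar, Functor.comp_map] at h
    exact h
  have keyB : R'.data.W.Q.map (H.1.map (P.data.Q.map
        (G.1.map (N.data.q.app (F.1.obj (M.data.Q.obj X)))))) ≫
      (theta (F.comp G) H).app X =
      R'.data.W.Q.map (H.1.map (P.data.q.app
          (G.1.obj (N.data.Q.obj (F.1.obj (M.data.Q.obj X)))))) ≫
        (theta F (G.comp H)).app X := by
    have hq : P.data.Q.map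
          (G.1.map (N.data.q.app (F.1.obj (M.data.Q.obj X)))) ≫
        P.data.q.app (G.1.obj (F.1.obj (M.data.Q.obj X))) =
        P.data.q.app (G.1.obj (N.data.Q.obj (F.1.obj (M.data.Q.obj X)))) ≫
          G.1.map (N.data.q.app (F.1.obj (M.data.Q.obj X))) := by
      simpa using P.data.q.naturality
        (G.1.map (N.data.q.app (F.1.obj (M.data.Q.obj X))))
    have t1 : (theta (F.comp G) H).app X = R'.data.W.Q.map (H.1.map
        (P.data.q.app (G.1.obj (F.1.obj (M.data.Q.obj X))))) :=
      theta_app _ _ X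
    have t2 : (theta F (G.comp H)).app X = R'.data.W.Q.map (H.1.map
        (G.1.map (N.data.q.app (F.1.obj (M.data.Q.obj X))))) :=
      theta_app _ _ X
    erw [t1, t2, ← R'.data.W.Q.map_comp, ← H.1.map_comp, hq, H.1.map_comp,
      R'.data.W.Q.map_comp]
    rfl
  have keyC := (LmapComp G H).inv.naturality ((eIso F).hom.app X)
  simp only [bar, Functor.comp_obj, Functor.comp_map] at keyC
  have expandC : (LmapComp G H).inv.app
      (N.data.W.Q.obj (F.1.obj (M.data.Q.obj X))) =
      (Lmap H).map ((eIso G).hom.app (F.1.obj (M.data.Q.obj X))) ≫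
        (eIso H).hom.app
          (G.1.obj (N.data.Q.obj (F.1.obj (M.data.Q.obj X)))) ≫
        (theta G H).app (F.1.obj (M.data.Q.obj X)) ≫
        (eIso (G.comp H)).inv.app (F.1.obj (M.data.Q.obj X)) :=
    LmapComp_inv_app G H _
  rw [NatTrans.comp_app, NatTrans.comp_app, whiskerRight_app, whiskerLeft_app,
    LmapComp_inv_app, LmapComp_inv_app, LmapComp_inv_app]
  simp only [Functor.map_comp, Category.assoc]
  rw [reassoc_of% cancelA, reassoc_of% keyA]
  erw [Category.assoc]
  erw [← Category.assoc (R'.data.W.Q.map _) ((theta (F.comp G) H).app X), keyB,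
    Category.assoc]
  rw [← reassoc_of% keyC, expandC]
  simp only [Category.assoc, Iso.inv_hom_id_app_assoc]
  rw [show (theta G H).app (F.1.obj (M.data.Q.obj X)) =
      R'.data.W.Q.map (H.1.map (P.data.q.app
        (G.1.obj (N.data.Q.obj (F.1.obj (M.data.Q.obj X)))))) from
    theta_app _ _ _]
  rfl

lemma assoc_coh {R' : MCat} (F : GoodFun M N) (G : GoodFun N P)
    (H : GoodFun P R') :
    (LmapComp (F.comp G) H).hom ≫
        whiskerRight (LmapComp F G).hom (Lmap H) =
      (LmapComp F (G.comp H)).hom ≫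
        whiskerLeft (Lmap F) (LmapComp G H).hom := by
  have h : (LmapComp (F.comp G) H ≪≫
      isoWhiskerRight (LmapComp F G) (Lmap H)).inv =
      (LmapComp F (G.comp H) ≪≫
        isoWhiskerLeft (Lmap F) (LmapComp G H)).inv := by
    simp only [Iso.trans_inv, isoWhiskerRight_inv, isoWhiskerLeft_inv]
    exact assoc_inv F G H
  have h2 := (Iso.inv_eq_inv _ _).mp h
  simpa using h2

lemma id_comp_aux (F : GoodFun M N) :
    whiskerRight (LmapId M).hom (Lmap F) =
      (LmapComp (GoodFun.id M) F).inv := by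
  apply natTrans_ext M.data.W.Q M.data.W
  intro X
  rw [whiskerRight_app, LmapId_hom_app, Functor.map_comp, LmapComp_inv_app]
  have nat := (eIso F).hom.naturality (M.data.q.app X)
  simp only [bar, Functor.comp_map] at nat
  have th2 : (eIso F).hom.app ((GoodFun.id M).1.obj (M.data.Q.obj X)) ≫
      (theta (GoodFun.id M) F).app X ≫
        (eIso ((GoodFun.id M).comp F)).inv.app X =
      (eIso F).hom.app (M.data.Q.obj X) ≫
        N.data.W.Q.map (F.1.map (M.data.Q.map (M.data.q.app X))) ≫
        (eIso F).inv.app X := by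
    rw [show (theta (GoodFun.id M) F).app X =
        N.data.W.Q.map (F.1.map (M.data.q.app (M.data.Q.obj X))) from
      theta_app _ _ X]
    rw [Q_map_q F X]
    rfl
  rw [th2, ← reassoc_of% nat]
  simp
  rfl

lemma id_comp_coh (F : GoodFun M N) :
    (LmapComp (GoodFun.id M) F).hom ≫
        whiskerRight (LmapId M).hom (Lmap F) = 𝟙 (Lmap F) := by
  rw [id_comp_aux]
  exact Iso.hom_inv_id _

lemma comp_id_aux (F : GoodFun M N) :
    whiskerLeft (Lmap F) (LmapId N).hom =
      (LmapComp F (GoodFun.id N)).inv := by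
  apply natTrans_ext M.data.W.Q M.data.W
  intro X
  rw [whiskerLeft_app, LmapComp_inv_app]
  have nat := (LmapId N).hom.naturality ((eIso F).hom.app X)
  simp only [bar, Functor.comp_obj, Functor.comp_map, Functor.id_map] at nat
  rw [LmapId_hom_app] at nat
  try simp only [Category.assoc] at nat
  apply (cancel_mono ((eIso F).hom.app X)).mp
  rw [show (eIso (F.comp (GoodFun.id N))).inv.app X = (eIso F).inv.app X from
      rfl,
    show (theta F (GoodFun.id N)).app X =
      N.data.W.Q.map (N.data.q.app (F.1.obj (M.data.Q.obj X))) from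
      theta_app _ _ X]
  erw [Category.assoc, Category.assoc, Category.assoc, Iso.inv_hom_id_app,
    Category.comp_id]
  exact nat.symm

lemma comp_id_coh (F : GoodFun M N) :
    (LmapComp F (GoodFun.id N)).hom ≫
        whiskerLeft (Lmap F) (LmapId N).hom = 𝟙 (Lmap F) := by
  rw [comp_id_aux]
  exact Iso.hom_inv_id _

end

end LDerive

/-- Left deriving is a pseudofunctor: there is a pseudofunctor from the
2-category of model categories, functors preserving cofibrant objects and weak
equivalences between cofibrant objects, and natural transformations, to `Cat`,
sending `M` to `Ho(M)`; on 1-cells it is represented by `F ∘ Q`, on a 2-cell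
`α` it is represented by `α Q`, its compositor is represented by `h(q_{fQ-})`,
and its unitor is represented by `q`. -/
theorem left_deriving_is_pseudofunctor :
    ∃ (L : DerivedData)
      (e : ∀ {M N : MCat} (F : GoodFun M N),
        M.data.W.Q ⋙ L.map F ≅ (M.data.Q ⋙ F.1) ⋙ N.data.W.Q),
      (∀ {M N : MCat} (F G : GoodFun M N) (α : F.1 ⟶ G.1),
        Functor.whiskerLeft M.data.W.Q (L.map₂ α) =
          (e F).hom ≫ Functor.whiskerRight (Functor.whiskerLeft M.data.Q α) N.data.W.Q ≫
            (e G).inv) ∧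
      (∀ M : MCat,
        Functor.whiskerLeft M.data.W.Q (L.mapId M).hom =
          (e (GoodFun.id M)).hom ≫ Functor.whiskerRight M.data.q M.data.W.Q) ∧
      (∀ {M N P : MCat} (F : GoodFun M N) (G : GoodFun N P),
        Functor.whiskerLeft M.data.W.Q (L.mapComp F G).inv =
          Functor.whiskerRight (e F).hom (L.map G) ≫
            Functor.whiskerLeft (M.data.Q ⋙ F.1) (e G).hom ≫
            Functor.whiskerRight
              (Functor.whiskerLeft (M.data.Q ⋙ F.1) (Functor.whiskerRight N.data.q G.1))
              P.data.W.Q ≫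
            (e (F.comp G)).inv) := by
  
  refine ⟨{ map := fun F => LDerive.Lmap F,
            map₂ := fun α => LDerive.Lmap₂ α,
            mapId := fun M => LDerive.LmapId M,
            mapComp := fun F G => LDerive.LmapComp F G,
            map₂_id := fun F => LDerive.Lmap₂_id F,
            map₂_comp := fun α β => LDerive.Lmap₂_comp α β,
            mapComp_natural := fun α β => LDerive.LmapComp_natural α β,
            assoc_coherence := fun F G H => LDerive.assoc_coh F G H,
            id_comp_coherence := fun F => LDerive.id_comp_coh F,
            comp_id_coherence := fun F => LDerive.comp_id_coh F },
    fun {M N} (F : GoodFun M N) => LDerive.eIso F, ?_, ?_, ?_⟩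
  · intro M N F G α
    apply NatTrans.ext; funext X
    rw [Functor.whiskerLeft_app, LDerive.Lmap₂_app]
    rfl
  · intro M
    apply NatTrans.ext; funext X
    rw [Functor.whiskerLeft_app, LDerive.LmapId_hom_app]
    rfl
  · intro M N P F G
    apply NatTrans.ext; funext X
    rw [Functor.whiskerLeft_app, LDerive.LmapComp_inv_app]
    rfl
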